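/- arXiv:1809.08923 — 5 statements merged into one kernel-verified Lean document; each statement's English description precedes it below -/
import Mathlib

section
/- Let M_1 = (S,A,P,r,γ_1) and M_2 = (S,A,P,r,γ_2) be two finite MDPs differing only in discount factor, with rewards in [0,1] and optimal Q-functions Q_1*, Q_2*. Then ‖Q_1* - Q_2*‖_∞ ≤ |γ_1 - γ_2| ‖r‖_∞ / ((1-γ_1)(1-γ_2)). -/
/-- For two finite MDPs differing only in the discount factor, with rewards in
`[0,1]` and optimal Q-functions `Q₁*`, `Q₂*`, we have
`‖Q₁* - Q₂*‖_∞ ≤ |γ₁ - γ₂| ‖r‖_∞ / ((1-γ₁)(1-γ₂))`. -/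
theorem optimal_q_diff_discount
    {S A : Type*} [Fintype S] [Fintype A] [Nonempty S] [Nonempty A]
    (P : S → A → S → ℝ) (hP0 : ∀ s a s', 0 ≤ P s a s')
    (hP1 : ∀ s a, ∑ s', P s a s' = 1)
    (r : S → A → ℝ) (hr : ∀ s a, r s a ∈ Set.Icc (0 : ℝ) 1)
    (γ₁ γ₂ : ℝ) (hγ₁ : γ₁ ∈ Set.Ioo (0 : ℝ) 1) (hγ₂ : γ₂ ∈ Set.Ioo (0 : ℝ) 1)
    (Q₁ Q₂ : S → A → ℝ)
    (hQ₁ : ∀ s a, Q₁ s a = r s a + γ₁ * ∑ s', P s a s' * (⨆ a', Q₁ s' a'))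
    (hQ₂ : ∀ s a, Q₂ s a = r s a + γ₂ * ∑ s', P s a s' * (⨆ a', Q₂ s' a')) :
    (⨆ p : S × A, |Q₁ p.1 p.2 - Q₂ p.1 p.2|) ≤
      |γ₁ - γ₂| * (⨆ p : S × A, |r p.1 p.2|) / ((1 - γ₁) * (1 - γ₂)) := by
  obtain ⟨hγ₁0, hγ₁1⟩ := hγ₁
  obtain ⟨hγ₂0, hγ₂1⟩ := hγ₂
  have h1γ₁ : (0:ℝ) < 1 - γ₁ := by linarith
  have h1γ₂ : (0:ℝ) < 1 - γ₂ := by linarith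
  have bdd : ∀ f : S × A → ℝ, BddAbove (Set.range f) :=
    fun f => Set.Finite.bddAbove (Set.finite_range f)
  have bddA : ∀ f : A → ℝ, BddAbove (Set.range f) :=
    fun f => Set.Finite.bddAbove (Set.finite_range f)
  set R := ⨆ p : S × A, |r p.1 p.2| with hRdef
  set M := ⨆ p : S × A, |Q₁ p.1 p.2| with hMdef
  set D := ⨆ p : S × A, |Q₁ p.1 p.2 - Q₂ p.1 p.2| with hDdef
  have hrR : ∀ s a, |r s a| ≤ R := fun s a => le_ciSup (bdd fun p => |r p.1 p.2|) (s, a)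
  have hR0 : 0 ≤ R :=
    le_trans (abs_nonneg _) (hrR (Classical.arbitrary S) (Classical.arbitrary A))
  have hQM : ∀ s a, |Q₁ s a| ≤ M := fun s a => le_ciSup (bdd fun p => |Q₁ p.1 p.2|) (s, a)
  have hM0 : 0 ≤ M :=
    le_trans (abs_nonneg _) (hQM (Classical.arbitrary S) (Classical.arbitrary A))
  have hQD : ∀ s a, |Q₁ s a - Q₂ s a| ≤ D := fun s a => le_ciSup (bdd fun p => |Q₁ p.1 p.2 - Q₂ p.1 p.2|) (s, a)
  have hD0 : 0 ≤ D :=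
    le_trans (abs_nonneg _) (hQD (Classical.arbitrary S) (Classical.arbitrary A))
  -- value function bounds
  have hV1 : ∀ s, |⨆ a, Q₁ s a| ≤ M := by
    intro s
    rw [abs_le]
    refine ⟨?_, ciSup_le fun a => (abs_le.mp (hQM s a)).2⟩
    exact le_trans (abs_le.mp (hQM s (Classical.arbitrary A))).1
      (le_ciSup (bddA _) (Classical.arbitrary A))
  have hVD : ∀ s, |(⨆ a, Q₁ s a) - ⨆ a, Q₂ s a| ≤ D := by
    intro s
    rw [abs_le]
    constructor
    · rw [neg_le, neg_sub]
      rw [sub_le_iff_le_add]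
      refine ciSup_le fun a => ?_
      have h1 : Q₂ s a - Q₁ s a ≤ D := by
        have := (abs_le.mp (hQD s a)).1; linarith
      have h2 : Q₁ s a ≤ ⨆ a', Q₁ s a' := le_ciSup (bddA _) a
      linarith
    · rw [sub_le_iff_le_add]
      refine ciSup_le fun a => ?_
      have h1 : Q₁ s a - Q₂ s a ≤ D := (abs_le.mp (hQD s a)).2
      have h2 : Q₂ s a ≤ ⨆ a', Q₂ s a' := le_ciSup (bddA _) a
      linarith
  -- weighted average bound
  have sumBound : ∀ (v : S → ℝ) (C : ℝ), (∀ s', |v s'| ≤ C) →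
      ∀ s a, |∑ s', P s a s' * v s'| ≤ C := by
    intro v C hv s a
    calc |∑ s', P s a s' * v s'| ≤ ∑ s', |P s a s' * v s'| :=
          Finset.abs_sum_le_sum_abs _ _
      _ = ∑ s', P s a s' * |v s'| := by
          refine Finset.sum_congr rfl fun s' _ => ?_
          rw [abs_mul, abs_of_nonneg (hP0 s a s')]
      _ ≤ ∑ s', P s a s' * C :=
          Finset.sum_le_sum fun s' _ =>
            mul_le_mul_of_nonneg_left (hv s') (hP0 s a s')
      _ = C := by rw [← Finset.sum_mul, hP1, one_mul]
  -- bound on M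
  have hMle : M * (1 - γ₁) ≤ R := by
    have : M ≤ R + γ₁ * M := by
      refine ciSup_le fun p => ?_
      obtain ⟨s, a⟩ := p
      rw [hQ₁ s a]
      calc |r s a + γ₁ * ∑ s', P s a s' * (⨆ a', Q₁ s' a')|
          ≤ |r s a| + |γ₁ * ∑ s', P s a s' * (⨆ a', Q₁ s' a')| := abs_add_le _ _
        _ ≤ R + γ₁ * M := by
            refine add_le_add (hrR s a) ?_
            rw [abs_mul, abs_of_pos hγ₁0]
            exact mul_le_mul_of_nonneg_left
              (sumBound _ M hV1 s a) (le_of_lt hγ₁0)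
    nlinarith
  -- main recursive bound
  have hDle : D ≤ |γ₁ - γ₂| * M + γ₂ * D := by
    refine ciSup_le fun p => ?_
    obtain ⟨s, a⟩ := p
    have hrw : Q₁ s a - Q₂ s a =
        (γ₁ - γ₂) * (∑ s', P s a s' * (⨆ a', Q₁ s' a'))
          + γ₂ * (∑ s', P s a s' * ((⨆ a', Q₁ s' a') - ⨆ a', Q₂ s' a')) := by
      rw [hQ₁ s a, hQ₂ s a]
      rw [show (∑ s', P s a s' * ((⨆ a', Q₁ s' a') - ⨆ a', Q₂ s' a'))
          = (∑ s', P s a s' * (⨆ a', Q₁ s' a'))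
            - ∑ s', P s a s' * (⨆ a', Q₂ s' a') by
        rw [← Finset.sum_sub_distrib]
        exact Finset.sum_congr rfl fun s' _ => by ring]
      ring
    rw [hrw]
    calc |(γ₁ - γ₂) * (∑ s', P s a s' * (⨆ a', Q₁ s' a'))
          + γ₂ * (∑ s', P s a s' * ((⨆ a', Q₁ s' a') - ⨆ a', Q₂ s' a'))|
        ≤ |(γ₁ - γ₂) * (∑ s', P s a s' * (⨆ a', Q₁ s' a'))|
          + |γ₂ * (∑ s', P s a s' * ((⨆ a', Q₁ s' a') - ⨆ a', Q₂ s' a'))| :=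
          abs_add_le _ _
      _ ≤ |γ₁ - γ₂| * M + γ₂ * D := by
          refine add_le_add ?_ ?_
          · rw [abs_mul]
            exact mul_le_mul_of_nonneg_left (sumBound _ M hV1 s a) (abs_nonneg _)
          · rw [abs_mul, abs_of_pos hγ₂0]
            exact mul_le_mul_of_nonneg_left (sumBound _ D hVD s a) (le_of_lt hγ₂0)
  rw [le_div_iff₀ (by positivity)]
  nlinarith [abs_nonneg (γ₁ - γ₂), mul_le_mul_of_nonneg_left hMle (abs_nonneg (γ₁ - γ₂)),
    mul_le_mul_of_nonneg_left hDle (le_of_lt h1γ₁)]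
end

section
/- Let M_1 = (S,A,P_1,r,γ) and M_2 = (S,A,P_2,r,γ) be two finite MDPs differing only in transition kernel, with optimal Q-functions Q_1*, Q_2*. Then ‖Q_1* - Q_2*‖_∞ ≤ γ ‖r‖_∞ ‖P_1 - P_2‖_∞ / (1-γ)², where ‖P_1 - P_2‖_∞ = max_{s,a} ∑_{s'} |P_1(s'|s,a) - P_2(s'|s,a)|. -/
lemma bddAboveR {ι : Type*} [Finite ι] (f : ι → ℝ) : BddAbove (Set.range f) :=
  (Set.finite_range f).bddAbove

lemma abs_ciSup_sub_ciSup_le {ι : Type*} [Fintype ι] [Nonempty ι] (f g : ι → ℝ) :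
    |(⨆ i, f i) - ⨆ i, g i| ≤ ⨆ i, |f i - g i| := by
  rw [abs_sub_le_iff]
  constructor
  · rw [sub_le_iff_le_add]
    refine ciSup_le fun i => ?_
    have h1 : f i ≤ |f i - g i| + g i := by
      have := le_abs_self (f i - g i); linarith
    exact h1.trans (add_le_add (le_ciSup (bddAboveR fun i => |f i - g i|) i) (le_ciSup (bddAboveR g) i))
  · rw [sub_le_iff_le_add]
    refine ciSup_le fun i => ?_
    have h1 : g i ≤ |f i - g i| + f i := by
      have := neg_abs_le (f i - g i); linarith
    exact h1.trans (add_le_add (le_ciSup (bddAboveR fun i => |f i - g i|) i) (le_ciSup (bddAboveR f) i))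

/-- For two finite MDPs differing only in the transition kernel, with optimal
Q-functions `Q₁*`, `Q₂*`, we have
`‖Q₁* - Q₂*‖_∞ ≤ γ ‖r‖_∞ ‖P₁ - P₂‖_∞ / (1-γ)²`, where
`‖P₁ - P₂‖_∞ = max_{s,a} ∑_{s'} |P₁(s'|s,a) - P₂(s'|s,a)|`. -/
theorem optimal_q_diff_transition
    {S A : Type*} [Fintype S] [Fintype A] [Nonempty S] [Nonempty A]
    (P₁ P₂ : S → A → S → ℝ)
    (hP₁0 : ∀ s a s', 0 ≤ P₁ s a s') (hP₁1 : ∀ s a, ∑ s', P₁ s a s' = 1)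
    (hP₂0 : ∀ s a s', 0 ≤ P₂ s a s') (hP₂1 : ∀ s a, ∑ s', P₂ s a s' = 1)
    (r : S → A → ℝ) (γ : ℝ) (hγ0 : 0 < γ) (hγ1 : γ < 1)
    (Q₁ Q₂ : S → A → ℝ)
    (hQ₁ : ∀ s a, Q₁ s a = r s a + γ * ∑ s', P₁ s a s' * (⨆ a', Q₁ s' a'))
    (hQ₂ : ∀ s a, Q₂ s a = r s a + γ * ∑ s', P₂ s a s' * (⨆ a', Q₂ s' a')) :
    (⨆ p : S × A, |Q₁ p.1 p.2 - Q₂ p.1 p.2|) ≤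
      γ * (⨆ p : S × A, |r p.1 p.2|) *
        (⨆ p : S × A, ∑ s', |P₁ p.1 p.2 s' - P₂ p.1 p.2 s'|) / (1 - γ) ^ 2 := by
  set V₁ : S → ℝ := fun s' => ⨆ a', Q₁ s' a' with hV₁
  set V₂ : S → ℝ := fun s' => ⨆ a', Q₂ s' a' with hV₂
  set D : ℝ := ⨆ p : S × A, |Q₁ p.1 p.2 - Q₂ p.1 p.2| with hD
  set R : ℝ := ⨆ p : S × A, |r p.1 p.2| with hR
  set Δ : ℝ := ⨆ p : S × A, ∑ s', |P₁ p.1 p.2 s' - P₂ p.1 p.2 s'| with hΔ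
  set M : ℝ := ⨆ p : S × A, |Q₁ p.1 p.2| with hM
  have hM0 : 0 ≤ M := (abs_nonneg _).trans (le_ciSup (bddAboveR fun p : S × A => |Q₁ p.1 p.2|) (Classical.arbitrary _))
  have hD0 : 0 ≤ D := (abs_nonneg _).trans (le_ciSup (bddAboveR fun p : S × A => |Q₁ p.1 p.2 - Q₂ p.1 p.2|) (Classical.arbitrary _))
  have hΔ0 : 0 ≤ Δ := by
    refine le_trans ?_ (le_ciSup (bddAboveR fun p : S × A => ∑ s', |P₁ p.1 p.2 s' - P₂ p.1 p.2 s'|) (Classical.arbitrary (S × A)))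
    exact Finset.sum_nonneg fun _ _ => abs_nonneg _
  have hR0 : 0 ≤ R := (abs_nonneg _).trans (le_ciSup (bddAboveR fun p : S × A => |r p.1 p.2|) (Classical.arbitrary _))
  -- |V₁ s'| ≤ M
  have hVM : ∀ s', |V₁ s'| ≤ M := by
    intro s'
    rw [abs_le]
    constructor
    · have h1 : -M ≤ Q₁ s' (Classical.arbitrary A) := by
        have := neg_abs_le (Q₁ s' (Classical.arbitrary A))
        have h2 : |Q₁ s' (Classical.arbitrary A)| ≤ M := le_ciSup (bddAboveR fun p : S × A => |Q₁ p.1 p.2|) (s', Classical.arbitrary A)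
        linarith
      exact h1.trans (le_ciSup (bddAboveR fun a' => Q₁ s' a') (Classical.arbitrary A))
    · exact ciSup_le fun a' => (le_abs_self _).trans (le_ciSup (bddAboveR fun p : S × A => |Q₁ p.1 p.2|) (s', a'))
  -- |V₁ s' - V₂ s'| ≤ D
  have hVD : ∀ s', |V₁ s' - V₂ s'| ≤ D := by
    intro s'
    refine (abs_ciSup_sub_ciSup_le _ _).trans (ciSup_le fun a' => ?_)
    exact le_ciSup (bddAboveR fun p : S × A => |Q₁ p.1 p.2 - Q₂ p.1 p.2|) (s', a')
  -- M ≤ R + γ M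
  have hMR : (1 - γ) * M ≤ R := by
    have : M ≤ R + γ * M := by
      refine ciSup_le fun ⟨s, a⟩ => ?_
      have hsum : |∑ s', P₁ s a s' * V₁ s'| ≤ M := by
        calc |∑ s', P₁ s a s' * V₁ s'| ≤ ∑ s', |P₁ s a s' * V₁ s'| :=
              Finset.abs_sum_le_sum_abs _ _
          _ ≤ ∑ s', P₁ s a s' * M := by
              refine Finset.sum_le_sum fun s' _ => ?_
              rw [abs_mul, abs_of_nonneg (hP₁0 s a s')]
              exact mul_le_mul_of_nonneg_left (hVM s') (hP₁0 s a s')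
          _ = M := by rw [← Finset.sum_mul, hP₁1, one_mul]
      calc |Q₁ s a| = |r s a + γ * ∑ s', P₁ s a s' * V₁ s'| := by rw [hQ₁ s a]
        _ ≤ |r s a| + |γ * ∑ s', P₁ s a s' * V₁ s'| := abs_add_le _ _
        _ ≤ R + γ * M := by
            refine add_le_add (le_ciSup (bddAboveR fun p : S × A => |r p.1 p.2|) (s, a)) ?_
            rw [abs_mul, abs_of_pos hγ0]
            exact mul_le_mul_of_nonneg_left hsum hγ0.le
    linarith
  -- D ≤ γ (M Δ + D)
  have hDkey : D ≤ γ * (M * Δ) + γ * D := by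
    refine ciSup_le fun ⟨s, a⟩ => ?_
    have hsum : |∑ s', P₁ s a s' * V₁ s' - ∑ s', P₂ s a s' * V₂ s'| ≤ M * Δ + D := by
      have heq : ∑ s', P₁ s a s' * V₁ s' - ∑ s', P₂ s a s' * V₂ s' =
          ∑ s', ((P₁ s a s' - P₂ s a s') * V₁ s' + P₂ s a s' * (V₁ s' - V₂ s')) := by
        rw [← Finset.sum_sub_distrib]
        exact Finset.sum_congr rfl fun s' _ => by ring
      rw [heq]
      calc |∑ s', ((P₁ s a s' - P₂ s a s') * V₁ s' + P₂ s a s' * (V₁ s' - V₂ s'))|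
          ≤ ∑ s', |(P₁ s a s' - P₂ s a s') * V₁ s' + P₂ s a s' * (V₁ s' - V₂ s')| :=
            Finset.abs_sum_le_sum_abs _ _
        _ ≤ ∑ s', (|P₁ s a s' - P₂ s a s'| * M + P₂ s a s' * D) := by
            refine Finset.sum_le_sum fun s' _ => ?_
            refine (abs_add_le _ _).trans (add_le_add ?_ ?_)
            · rw [abs_mul]
              exact mul_le_mul_of_nonneg_left (hVM s') (abs_nonneg _)
            · rw [abs_mul, abs_of_nonneg (hP₂0 s a s')]
              exact mul_le_mul_of_nonneg_left (hVD s') (hP₂0 s a s')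
        _ = (∑ s', |P₁ s a s' - P₂ s a s'|) * M + D := by
            rw [Finset.sum_add_distrib, ← Finset.sum_mul, ← Finset.sum_mul, hP₂1, one_mul]
        _ ≤ M * Δ + D := by
            have h1 : (∑ s', |P₁ s a s' - P₂ s a s'|) ≤ Δ := le_ciSup (bddAboveR fun p : S × A => ∑ s', |P₁ p.1 p.2 s' - P₂ p.1 p.2 s'|) (s, a)
            nlinarith
    calc |Q₁ s a - Q₂ s a|
        = |γ * (∑ s', P₁ s a s' * V₁ s' - ∑ s', P₂ s a s' * V₂ s')| := by
          rw [hQ₁ s a, hQ₂ s a]; ring_nf; rfl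
      _ = γ * |∑ s', P₁ s a s' * V₁ s' - ∑ s', P₂ s a s' * V₂ s'| := by
          rw [abs_mul, abs_of_pos hγ0]
      _ ≤ γ * (M * Δ + D) := mul_le_mul_of_nonneg_left hsum hγ0.le
      _ = γ * (M * Δ) + γ * D := by ring
  rw [le_div_iff₀ (by nlinarith : (0:ℝ) < (1 - γ) ^ 2)]
  nlinarith [mul_le_mul_of_nonneg_right hMR (mul_nonneg hγ0.le hΔ0),
    mul_le_mul_of_nonneg_left hDkey (sub_pos.mpr hγ1).le]
end

section
/- Let γβ* ∈ (1/2, 1) and define w_k = (∏_{i=n-k}^{n-1}(i+γβ*))/(∏_{i=n-k}^{n} i). Then there exists a constant C (depending only on γβ*) such that ∑_{k=0}^{n-1} w_k² ≤ C / n^{2-2γβ*} for all n ≥ 3. -/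
open Finset

/-- One-step bound: for `x ≥ 2` and `0 ≤ c ≤ 1`, `(x+c)/x ≤ (x/(x-1))^c`. -/
lemma ttql_step_bound {c x : ℝ} (hc0 : 0 ≤ c) (hc1 : c ≤ 1) (hx : 2 ≤ x) :
    (x + c) / x ≤ (x / (x - 1)) ^ c := by
  have hx0 : (0 : ℝ) < x := by linarith
  have hx1 : (0 : ℝ) < x - 1 := by linarith
  have hxc : (0 : ℝ) < x - c := by linarith
  -- Bernoulli: ((x-1)/x)^c ≤ 1 - c/x
  have hb : ((x - 1) / x) ^ c ≤ (x - c) / x := by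
    have hs : (-1 : ℝ) ≤ -(1 / x) := by
      rw [neg_le_neg_iff]
      rw [div_le_one hx0]; linarith
    have := rpow_one_add_le_one_add_mul_self hs hc0 hc1
    have h1 : (1 : ℝ) + -(1 / x) = (x - 1) / x := by field_simp; ring
    have h2 : (1 : ℝ) + c * -(1 / x) = (x - c) / x := by field_simp; ring
    rw [h1, h2] at this
    exact this
  have hbpos : (0 : ℝ) < ((x - 1) / x) ^ c :=
    Real.rpow_pos_of_pos (div_pos hx1 hx0) c
  have hfirst : (x + c) / x ≤ x / (x - c) := by
    rw [div_le_div_iff₀ hx0 hxc]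
    nlinarith [sq_nonneg c]
  have hsecond : x / (x - c) ≤ (((x - 1) / x) ^ c)⁻¹ := by
    have h3 : ((x - c) / x)⁻¹ = x / (x - c) := by rw [inv_div]
    rw [← h3]
    exact inv_anti₀ hbpos hb
  have hlast : (((x - 1) / x) ^ c)⁻¹ = (x / (x - 1)) ^ c := by
    rw [← Real.inv_rpow (le_of_lt (div_pos hx1 hx0)), inv_div]
  calc (x + c) / x ≤ x / (x - c) := hfirst
    _ ≤ (((x - 1) / x) ^ c)⁻¹ := hsecond
    _ = (x / (x - 1)) ^ c := hlast

/-- Telescoping product bound: for `2 ≤ m ≤ n`,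
`∏_{i=m}^{n-1} (i+c)/i ≤ ((n-1)/(m-1))^c`. -/
lemma ttql_prod_bound {c : ℝ} (hc0 : 0 ≤ c) (hc1 : c ≤ 1) {m : ℕ} (hm : 2 ≤ m) :
    ∀ n : ℕ, m ≤ n →
      ∏ i ∈ Finset.Ico m n, (((i : ℝ) + c) / i) ≤ (((n : ℝ) - 1) / ((m : ℝ) - 1)) ^ c := by
  intro n hn
  induction n, hn using Nat.le_induction with
  | base =>
      simp only [Finset.Ico_self, Finset.prod_empty]
      have : ((m : ℝ) - 1) / ((m : ℝ) - 1) = 1 := by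
        apply div_self
        have : (2 : ℝ) ≤ (m : ℕ) := by exact_mod_cast hm
        linarith
      rw [this, Real.one_rpow]
  | succ n hn ih =>
      have hn2 : (2 : ℝ) ≤ (n : ℝ) := by
        have : 2 ≤ n := le_trans hm hn
        exact_mod_cast this
      have hm1 : (0 : ℝ) < (m : ℝ) - 1 := by
        have : (2 : ℝ) ≤ (m : ℝ) := by exact_mod_cast hm
        linarith
      rw [Finset.prod_Ico_succ_top hn]
      have hstep : ((n : ℝ) + c) / n ≤ ((n : ℝ) / ((n : ℝ) - 1)) ^ c :=
        ttql_step_bound hc0 hc1 hn2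
      have hprodpos : (0 : ℝ) ≤ ∏ i ∈ Finset.Ico m n, (((i : ℝ) + c) / i) := by
        apply Finset.prod_nonneg
        intro i hi
        have hi1 : 2 ≤ i := le_trans hm (Finset.mem_Ico.mp hi).1
        have : (2 : ℝ) ≤ (i : ℝ) := by exact_mod_cast hi1
        positivity
      have hfacnn : (0 : ℝ) ≤ ((n : ℝ) + c) / n := by positivity
      calc (∏ i ∈ Finset.Ico m n, (((i : ℝ) + c) / i)) * (((n : ℝ) + c) / n)
          ≤ (((n : ℝ) - 1) / ((m : ℝ) - 1)) ^ c * ((n : ℝ) / ((n : ℝ) - 1)) ^ c := by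
            apply mul_le_mul ih hstep hfacnn
              (Real.rpow_nonneg (div_nonneg (by linarith) (by linarith)) c)
        _ = ((((n : ℝ) - 1) / ((m : ℝ) - 1)) * ((n : ℝ) / ((n : ℝ) - 1))) ^ c := by
            rw [← Real.mul_rpow (div_nonneg (by linarith) (by linarith))
              (div_nonneg (by linarith) (by linarith))]
        _ = ((((n + 1 : ℕ) : ℝ) - 1) / ((m : ℝ) - 1)) ^ c := by
            congr 1
            have hne1 : ((n : ℝ) - 1) ≠ 0 := by linarith
            have hne2 : ((m : ℝ) - 1) ≠ 0 := by linarith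
            push_cast
            field_simp
            ring

/-- For a discounted error ratio `c = γβ* ∈ (1/2, 1)` and weights
`w_k = (∏_{i=n-k}^{n-1} (i + c)) / (∏_{i=n-k}^{n} i)`, there is a constant `C`
depending only on `c` such that `∑_{k=0}^{n-1} w_k² ≤ C / n^{2-2c}` for all
`n ≥ 3`. -/
theorem ttql_weight_sum_sq_large_ratio
    (c : ℝ) (hc0 : 1 / 2 < c) (hc : c < 1) :
    ∃ C : ℝ, 0 < C ∧ ∀ n : ℕ, 3 ≤ n →
      ∑ k ∈ Finset.range n,
          ((∏ i ∈ Finset.Ico (n - k) n, ((i : ℝ) + c)) /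
            (∏ i ∈ Finset.Icc (n - k) n, (i : ℝ))) ^ 2 ≤
        C / (n : ℝ) ^ (2 - 2 * c) := by
  have hc0' : (0 : ℝ) ≤ c := by linarith
  have hc1' : c ≤ 1 := le_of_lt hc
  have h2c : (1 : ℝ) < 2 * c := by linarith
  have hsum0 : Summable (fun j : ℕ => 1 / (j : ℝ) ^ (2 * c)) :=
    Real.summable_one_div_nat_rpow.mpr h2c
  have hsum : Summable (fun j : ℕ => 1 / ((j : ℝ) + 1) ^ (2 * c)) := by
    have h := (summable_nat_add_iff (f := fun j : ℕ => 1 / (j : ℝ) ^ (2 * c)) 1).mpr hsum0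
    simpa using h
  set S := ∑' j : ℕ, 1 / ((j : ℝ) + 1) ^ (2 * c) with hSdef
  have hS0 : 0 ≤ S := tsum_nonneg fun j => by positivity
  refine ⟨S + 4, by linarith, ?_⟩
  intro n hn
  have hN3 : (3 : ℝ) ≤ (n : ℝ) := by exact_mod_cast hn
  have hN0 : (0 : ℝ) < (n : ℝ) := by linarith
  -- rewrite the weights
  have hterm : ∀ k, k < n →
      ((∏ i ∈ Finset.Ico (n - k) n, ((i : ℝ) + c)) /
        (∏ i ∈ Finset.Icc (n - k) n, (i : ℝ)))
        = (∏ i ∈ Finset.Ico (n - k) n, (((i : ℝ) + c) / i)) / n := by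
    intro k hk
    have hmn : n - k ≤ n := Nat.sub_le n k
    have hIcc : Finset.Icc (n - k) n = Finset.Ico (n - k) (n + 1) :=
      (Finset.Ico_add_one_right_eq_Icc _ _).symm
    rw [hIcc, Finset.prod_Ico_succ_top hmn, Finset.prod_div_distrib, div_div]
  -- rpow algebra helper
  have hsq : ∀ x : ℝ, 0 < x → (x ^ c) ^ 2 = x ^ (2 * c) := by
    intro x hx
    rw [← Real.rpow_natCast (x ^ c) 2, ← Real.rpow_mul hx.le]
    norm_num [mul_comm]
  have hNsub : (n : ℝ) ^ (2 * c - 2) = (n : ℝ) ^ (2 * c) / (n : ℝ) ^ 2 := by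
    rw [Real.rpow_sub hN0]
    congr 1
    rw [← Real.rpow_natCast (n : ℝ) 2]
    norm_num
  -- bound for the head terms
  have hbound1 : ∀ k ∈ Finset.range (n - 1),
      ((∏ i ∈ Finset.Ico (n - k) n, ((i : ℝ) + c)) /
        (∏ i ∈ Finset.Icc (n - k) n, (i : ℝ))) ^ 2
        ≤ (n : ℝ) ^ (2 * c - 2) * (1 / ((n - 1 - k : ℕ) : ℝ) ^ (2 * c)) := by
    intro k hk
    have hk' : k < n - 1 := Finset.mem_range.mp hk
    have hm2 : 2 ≤ n - k := by omega
    have hmn : n - k ≤ n := Nat.sub_le n k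
    rw [hterm k (by omega)]
    set m := n - k with hm
    have hm2' : (2 : ℝ) ≤ (m : ℝ) := by exact_mod_cast hm2
    have hB : (0 : ℝ) < (m : ℝ) - 1 := by linarith
    have hcast : ((n - 1 - k : ℕ) : ℝ) = (m : ℝ) - 1 := by
      have h1 : n - 1 - k = m - 1 := by omega
      rw [h1, Nat.cast_sub (by omega : 1 ≤ m), Nat.cast_one]
    have hP : ∏ i ∈ Finset.Ico m n, (((i : ℝ) + c) / i)
        ≤ ((n : ℝ) / ((m : ℝ) - 1)) ^ c := by
      calc ∏ i ∈ Finset.Ico m n, (((i : ℝ) + c) / i)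
          ≤ (((n : ℝ) - 1) / ((m : ℝ) - 1)) ^ c := ttql_prod_bound hc0' hc1' hm2 n hmn
        _ ≤ ((n : ℝ) / ((m : ℝ) - 1)) ^ c := by
            apply Real.rpow_le_rpow (div_nonneg (by linarith) (by linarith)) _ hc0'
            gcongr
            linarith
    have hPnn : 0 ≤ ∏ i ∈ Finset.Ico m n, (((i : ℝ) + c) / i) := by
      apply Finset.prod_nonneg
      intro i hi
      have hi1 : 2 ≤ i := le_trans hm2 (Finset.mem_Ico.mp hi).1
      have : (2 : ℝ) ≤ (i : ℝ) := by exact_mod_cast hi1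
      positivity
    have hw : (∏ i ∈ Finset.Ico m n, (((i : ℝ) + c) / i)) / n
        ≤ ((n : ℝ) / ((m : ℝ) - 1)) ^ c / n := by gcongr
    have hwnn : 0 ≤ (∏ i ∈ Finset.Ico m n, (((i : ℝ) + c) / i)) / n :=
      div_nonneg hPnn hN0.le
    calc ((∏ i ∈ Finset.Ico m n, (((i : ℝ) + c) / i)) / n) ^ 2
        ≤ (((n : ℝ) / ((m : ℝ) - 1)) ^ c / n) ^ 2 := pow_le_pow_left₀ hwnn hw 2
      _ = (((n : ℝ) ^ c / ((m : ℝ) - 1) ^ c) / n) ^ 2 := by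
          rw [Real.div_rpow hN0.le hB.le]
      _ = ((n : ℝ) ^ c) ^ 2 / ((((m : ℝ) - 1) ^ c) ^ 2 * (n : ℝ) ^ 2) := by
          rw [div_div, div_pow, mul_pow]
      _ = (n : ℝ) ^ (2 * c) / (((m : ℝ) - 1) ^ (2 * c) * (n : ℝ) ^ 2) := by
          rw [hsq _ hN0, hsq _ hB]
      _ = (n : ℝ) ^ (2 * c - 2) * (1 / ((m : ℝ) - 1) ^ (2 * c)) := by
          rw [hNsub]; ring
      _ = (n : ℝ) ^ (2 * c - 2) * (1 / ((n - 1 - k : ℕ) : ℝ) ^ (2 * c)) := by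
          rw [hcast]
  -- bound for the last term
  have hlast : ((∏ i ∈ Finset.Ico (n - (n - 1)) n, ((i : ℝ) + c)) /
      (∏ i ∈ Finset.Icc (n - (n - 1)) n, (i : ℝ))) ^ 2
      ≤ 4 * (n : ℝ) ^ (2 * c - 2) := by
    rw [hterm (n - 1) (by omega)]
    have hm1 : n - (n - 1) = 1 := by omega
    rw [hm1]
    have h1n : 1 < n := by omega
    have hPsplit := Finset.prod_eq_prod_Ico_succ_bot h1n (fun i => ((i : ℝ) + c) / i)
    have hP2 : ∏ i ∈ Finset.Ico 2 n, (((i : ℝ) + c) / i) ≤ (n : ℝ) ^ c := by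
      calc ∏ i ∈ Finset.Ico 2 n, (((i : ℝ) + c) / i)
          ≤ (((n : ℝ) - 1) / (((2 : ℕ) : ℝ) - 1)) ^ c :=
            ttql_prod_bound hc0' hc1' le_rfl n (by omega)
        _ ≤ (n : ℝ) ^ c := by
            apply Real.rpow_le_rpow _ _ hc0'
            · push_cast; apply div_nonneg <;> linarith
            · push_cast; rw [show (2 : ℝ) - 1 = 1 by norm_num, div_one]; linarith
    have hP2nn : 0 ≤ ∏ i ∈ Finset.Ico 2 n, (((i : ℝ) + c) / i) := by
      apply Finset.prod_nonneg
      intro i hi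
      have hi1 : 2 ≤ i := (Finset.mem_Ico.mp hi).1
      have : (2 : ℝ) ≤ (i : ℝ) := by exact_mod_cast hi1
      positivity
    have hP : ∏ i ∈ Finset.Ico 1 n, (((i : ℝ) + c) / i) ≤ 2 * (n : ℝ) ^ c := by
      rw [hPsplit]
      have hfac : (((1 : ℕ) : ℝ) + c) / ((1 : ℕ) : ℝ) ≤ 2 := by
        push_cast; rw [div_one]; linarith
      have hfacnn : 0 ≤ (((1 : ℕ) : ℝ) + c) / ((1 : ℕ) : ℝ) := by push_cast; positivity
      exact mul_le_mul hfac hP2 hP2nn (by norm_num)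
    have hPnn : 0 ≤ ∏ i ∈ Finset.Ico 1 n, (((i : ℝ) + c) / i) := by
      rw [hPsplit]
      exact mul_nonneg (by push_cast; positivity) hP2nn
    have hw : (∏ i ∈ Finset.Ico 1 n, (((i : ℝ) + c) / i)) / n ≤ 2 * (n : ℝ) ^ c / n := by
      gcongr
    have hwnn : 0 ≤ (∏ i ∈ Finset.Ico 1 n, (((i : ℝ) + c) / i)) / n :=
      div_nonneg hPnn hN0.le
    calc ((∏ i ∈ Finset.Ico 1 n, (((i : ℝ) + c) / i)) / n) ^ 2
        ≤ (2 * (n : ℝ) ^ c / n) ^ 2 := pow_le_pow_left₀ hwnn hw 2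
      _ = 4 * (((n : ℝ) ^ c) ^ 2 / (n : ℝ) ^ 2) := by ring
      _ = 4 * ((n : ℝ) ^ (2 * c) / (n : ℝ) ^ 2) := by rw [hsq _ hN0]
      _ = 4 * (n : ℝ) ^ (2 * c - 2) := by rw [hNsub]
  -- split off the last term
  have hn1 : n - 1 + 1 = n := by omega
  have hsplit := Finset.sum_range_succ
    (fun k => ((∏ i ∈ Finset.Ico (n - k) n, ((i : ℝ) + c)) /
      (∏ i ∈ Finset.Icc (n - k) n, (i : ℝ))) ^ 2) (n - 1)
  rw [hn1] at hsplit
  rw [hsplit]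
  -- head sum bound
  have hhead : ∑ k ∈ Finset.range (n - 1),
      ((∏ i ∈ Finset.Ico (n - k) n, ((i : ℝ) + c)) /
        (∏ i ∈ Finset.Icc (n - k) n, (i : ℝ))) ^ 2
      ≤ (n : ℝ) ^ (2 * c - 2) * S := by
    calc ∑ k ∈ Finset.range (n - 1),
        ((∏ i ∈ Finset.Ico (n - k) n, ((i : ℝ) + c)) /
          (∏ i ∈ Finset.Icc (n - k) n, (i : ℝ))) ^ 2
        ≤ ∑ k ∈ Finset.range (n - 1),
            (n : ℝ) ^ (2 * c - 2) * (1 / ((n - 1 - k : ℕ) : ℝ) ^ (2 * c)) :=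
          Finset.sum_le_sum hbound1
      _ = (n : ℝ) ^ (2 * c - 2) *
            ∑ k ∈ Finset.range (n - 1), 1 / ((n - 1 - k : ℕ) : ℝ) ^ (2 * c) := by
          rw [Finset.mul_sum]
      _ = (n : ℝ) ^ (2 * c - 2) *
            ∑ j ∈ Finset.range (n - 1), 1 / (((j + 1 : ℕ)) : ℝ) ^ (2 * c) := by
          congr 1
          rw [← Finset.sum_range_reflect (fun j => 1 / (((j + 1 : ℕ)) : ℝ) ^ (2 * c)) (n - 1)]
          apply Finset.sum_congr rfl
          intro k hk
          have hk' : k < n - 1 := Finset.mem_range.mp hk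
          have h : n - 1 - k = (n - 1 - 1 - k) + 1 := by omega
          rw [h]
      _ ≤ (n : ℝ) ^ (2 * c - 2) * S := by
          apply mul_le_mul_of_nonneg_left _ (Real.rpow_nonneg hN0.le _)
          have heq : ∀ j : ℕ, 1 / (((j + 1 : ℕ)) : ℝ) ^ (2 * c) = 1 / ((j : ℝ) + 1) ^ (2 * c) := by
            intro j; push_cast; ring_nf
          calc ∑ j ∈ Finset.range (n - 1), 1 / (((j + 1 : ℕ)) : ℝ) ^ (2 * c)
              = ∑ j ∈ Finset.range (n - 1), 1 / ((j : ℝ) + 1) ^ (2 * c) :=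
                Finset.sum_congr rfl fun j _ => heq j
            _ ≤ S := Summable.sum_le_tsum _ (fun j _ => by positivity) hsum
  -- combine
  have htotal : ∑ k ∈ Finset.range (n - 1),
      ((∏ i ∈ Finset.Ico (n - k) n, ((i : ℝ) + c)) /
        (∏ i ∈ Finset.Icc (n - k) n, (i : ℝ))) ^ 2
      + ((∏ i ∈ Finset.Ico (n - (n - 1)) n, ((i : ℝ) + c)) /
          (∏ i ∈ Finset.Icc (n - (n - 1)) n, (i : ℝ))) ^ 2
      ≤ (n : ℝ) ^ (2 * c - 2) * (S + 4) := by
    exact le_of_le_of_eq (add_le_add hhead hlast) (by ring)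
  refine htotal.trans_eq ?_
  rw [show 2 * c - 2 = -(2 - 2 * c) by ring, Real.rpow_neg hN0.le]
  rw [mul_comm, ← div_eq_mul_inv]
end

section
/- For any γβ* ∈ [0,1), with w_k = (∏_{i=n-k}^{n-1}(i+γβ*))/(∏_{i=n-k}^{n} i), the sum ∑_{k=0}^{n-1} w_k² tends to 0 as n → ∞. -/
open Finset Filter

noncomputable def ttqlS (c : ℝ) (n : ℕ) : ℝ :=
  ∑ k ∈ Finset.range n,
    ((∏ i ∈ Finset.Ico (n - k) n, ((i : ℝ) + c)) /
      (∏ i ∈ Finset.Icc (n - k) n, (i : ℝ))) ^ 2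

lemma ttqlS_nonneg (c : ℝ) (n : ℕ) : 0 ≤ ttqlS c n :=
  Finset.sum_nonneg fun _ _ => sq_nonneg _

lemma ttqlS_succ (c : ℝ) (n : ℕ) :
    ttqlS c (n + 1)
      = (((n : ℝ) + c) / ((n : ℝ) + 1)) ^ 2 * ttqlS c n + (1 / ((n : ℝ) + 1)) ^ 2 := by
  rw [ttqlS, Finset.sum_range_succ']
  congr 1
  · rw [ttqlS, Finset.mul_sum]
    refine Finset.sum_congr rfl fun k hk => ?_
    have h1 : n + 1 - (k + 1) = n - k := by omega
    have h2 : n - k ≤ n := Nat.sub_le n k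
    rw [h1, Finset.prod_Ico_succ_top h2, Finset.prod_Icc_succ_top (Nat.le_succ_of_le h2)]
    push_cast
    rw [mul_div_mul_comm]
    ring
  · simp only [Nat.sub_zero, Finset.Ico_self, Finset.prod_empty, Finset.Icc_self,
      Finset.prod_singleton]
    push_cast
    ring

lemma ttqlS_le (c : ℝ) (hc0 : 0 ≤ c) (hc : c < 1) :
    ∀ n : ℕ, 1 ≤ n → ttqlS c n ≤ (2 / (1 - c)) * (n : ℝ) ^ (-((1 - c) / 4) : ℝ) := by
  have hd : (0 : ℝ) < 1 - c := by linarith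
  set d : ℝ := 1 - c with hd_def
  have hd1 : d ≤ 1 := by simp [hd_def]; linarith
  set e : ℝ := d / 4 with he_def
  have he0 : 0 < e := by positivity
  have he1 : e ≤ 1 := by simp only [he_def]; linarith
  set K : ℝ := 2 / d with hK_def
  have hK0 : 0 < K := by positivity
  intro n hn
  induction n, hn using Nat.le_induction with
  | base =>
      have h1 : ttqlS c 1 = 1 := by simp [ttqlS]
      rw [h1, Nat.cast_one, Real.one_rpow, mul_one]
      rw [hK_def, le_div_iff₀ hd]
      linarith
  | succ n hn ih =>
      have hN1 : (1 : ℝ) ≤ (n : ℝ) := by exact_mod_cast hn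
      set N : ℝ := (n : ℝ) with hN_def
      have hN0 : (0 : ℝ) < N := by linarith
      have hN10 : (0 : ℝ) < N + 1 := by linarith
      set a : ℝ := (N + c) / (N + 1) with ha_def
      have ha0 : 0 ≤ a := by positivity
      have ha_eq : a = 1 - d / (N + 1) := by
        rw [ha_def, hd_def]
        field_simp
        ring
      have ha1 : a ≤ 1 := by
        rw [ha_eq]
        have : 0 ≤ d / (N + 1) := by positivity
        linarith
      -- key rpow inequality : N^(-e) ≤ (N+1)^(-e) * (1 + 2*e/(N+1))
      have hrpow : N ^ (-e) ≤ (N + 1) ^ (-e) * (1 + 2 * e / (N + 1)) := by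
        have hsplit : N ^ (-e) = (N + 1) ^ (-e) * ((N + 1) / N) ^ e := by
          rw [Real.div_rpow (by linarith) hN0.le, Real.rpow_neg hN10.le,
            Real.rpow_neg hN0.le]
          field_simp
        rw [hsplit]
        have hb : ((N + 1) / N) ^ e ≤ 1 + 2 * e / (N + 1) := by
          have h1 : (N + 1) / N = 1 + 1 / N := by field_simp
          have h2 : (1 + 1 / N : ℝ) ^ e ≤ 1 + e * (1 / N) :=
            rpow_one_add_le_one_add_mul_self (le_trans (by norm_num) (by positivity : (0:ℝ) ≤ 1 / N)) he0.le he1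
          have h3 : e * (1 / N) ≤ 2 * e / (N + 1) := by
            rw [mul_one_div, div_le_div_iff₀ hN0 hN10]
            nlinarith
          rw [h1]
          linarith
        have hpos : (0 : ℝ) ≤ (N + 1) ^ (-e) := Real.rpow_nonneg hN10.le _
        exact mul_le_mul_of_nonneg_left hb hpos
      -- combine
      have hstep1 : a * (1 + 2 * e / (N + 1)) ≤ 1 - d / (2 * (N + 1)) := by
        rw [ha_eq]
        have h2e : 2 * e = d / 2 := by rw [he_def]; ring
        rw [h2e]
        have hdpos : 0 < d := hd
        have : (1 - d / (N + 1)) * (1 + d / 2 / (N + 1))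
            = 1 - d / (2 * (N + 1)) - d ^ 2 / (2 * (N + 1) ^ 2) := by
          field_simp
          ring
        rw [this]
        have : 0 ≤ d ^ 2 / (2 * (N + 1) ^ 2) := by positivity
        linarith
      have hSn : ttqlS c n ≤ K * N ^ (-e) := ih
      have hmain : a ^ 2 * ttqlS c n + (1 / (N + 1)) ^ 2 ≤ K * (N + 1) ^ (-e) := by
        have h1 : a ^ 2 * ttqlS c n ≤ a * (K * N ^ (-e)) := by
          have ha2 : a ^ 2 ≤ a := by nlinarith
          have hS0 := ttqlS_nonneg c n
          calc a ^ 2 * ttqlS c n ≤ a * ttqlS c n := by nlinarith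
            _ ≤ a * (K * N ^ (-e)) := by
                exact mul_le_mul_of_nonneg_left hSn ha0
        have h2 : a * (K * N ^ (-e)) ≤ K * (N + 1) ^ (-e) * (1 - d / (2 * (N + 1))) := by
          calc a * (K * N ^ (-e))
              ≤ a * (K * ((N + 1) ^ (-e) * (1 + 2 * e / (N + 1)))) := by
                refine mul_le_mul_of_nonneg_left ?_ ha0
                exact mul_le_mul_of_nonneg_left hrpow hK0.le
            _ = K * (N + 1) ^ (-e) * (a * (1 + 2 * e / (N + 1))) := by ring
            _ ≤ K * (N + 1) ^ (-e) * (1 - d / (2 * (N + 1))) := by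
                refine mul_le_mul_of_nonneg_left hstep1 ?_
                positivity
        have h3 : (1 / (N + 1)) ^ 2 ≤ K * (N + 1) ^ (-e) * (d / (2 * (N + 1))) := by
          have hKd : K * (d / (2 * (N + 1))) = 1 / (N + 1) := by
            rw [hK_def]; field_simp
          have h4 : (N + 1) ^ (-(1 : ℝ)) ≤ (N + 1) ^ (-e) :=
            Real.rpow_le_rpow_of_exponent_le (by linarith) (by linarith)
          have h5 : (N + 1) ^ (-(1 : ℝ)) = 1 / (N + 1) := by
            rw [Real.rpow_neg_one]; exact inv_eq_one_div _
          calc (1 / (N + 1)) ^ 2 = (1 / (N + 1)) * (1 / (N + 1)) := sq (1 / (N + 1))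
            _ ≤ (N + 1) ^ (-e) * (1 / (N + 1)) := by
                refine mul_le_mul_of_nonneg_right ?_ (by positivity)
                rw [← h5]; exact h4
            _ = K * (N + 1) ^ (-e) * (d / (2 * (N + 1))) := by
                rw [← hKd]; ring
        calc a ^ 2 * ttqlS c n + (1 / (N + 1)) ^ 2
            ≤ K * (N + 1) ^ (-e) * (1 - d / (2 * (N + 1)))
              + K * (N + 1) ^ (-e) * (d / (2 * (N + 1))) := add_le_add (h1.trans h2) h3
          _ = K * (N + 1) ^ (-e) := by ring
      have hcast : ((n + 1 : ℕ) : ℝ) = N + 1 := by push_cast; rfl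
      rw [ttqlS_succ, hcast]
      exact hmain

/-- For any discounted error ratio `c = γβ* ∈ [0, 1)`, the sum of squared
weights `w_k = (∏_{i=n-k}^{n-1} (i + c)) / (∏_{i=n-k}^{n} i)` tends to `0`
as `n → ∞`. -/
theorem ttql_weight_sum_sq_tendsto_zero
    (c : ℝ) (hc0 : 0 ≤ c) (hc : c < 1) :
    Tendsto (fun n : ℕ =>
        ∑ k ∈ Finset.range n,
          ((∏ i ∈ Finset.Ico (n - k) n, ((i : ℝ) + c)) /
            (∏ i ∈ Finset.Icc (n - k) n, (i : ℝ))) ^ 2)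
      atTop (nhds 0) := by
  have hd : (0 : ℝ) < 1 - c := by linarith
  have he0 : (0 : ℝ) < (1 - c) / 4 := by positivity
  have hbound : Tendsto (fun n : ℕ => (2 / (1 - c)) * (n : ℝ) ^ (-((1 - c) / 4) : ℝ))
      atTop (nhds 0) := by
    have h1 : Tendsto (fun x : ℝ => x ^ (-((1 - c) / 4) : ℝ)) atTop (nhds 0) :=
      tendsto_rpow_neg_atTop he0
    have h2 : Tendsto (fun n : ℕ => ((n : ℝ)) ^ (-((1 - c) / 4) : ℝ)) atTop (nhds 0) :=
      h1.comp tendsto_natCast_atTop_atTop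
    simpa using h2.const_mul (2 / (1 - c))
  refine tendsto_of_tendsto_of_tendsto_of_le_of_le' tendsto_const_nhds hbound ?_ ?_
  · exact Eventually.of_forall fun n => ttqlS_nonneg c n
  · filter_upwards [eventually_ge_atTop 1] with n hn
    exact ttqlS_le c hc0 hc n hn
end

section
/- Let γβ* ∈ [0,1) and α_n = (∏_{i=1}^{n-1}(i+γβ*))/(∏_{i=2}^{n} i). Then α_n ≤ ((n-1)^{γβ*}/n)(1+γβ*) e^{(0.5 - ln 2)γβ*} for all n ≥ 3; in particular α_n = O(n^{γβ*-1}) and α_n → 0 as n → ∞. -/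
open Finset Filter

private lemma harmonic_bound : ∀ m : ℕ, 2 ≤ m →
    ∑ i ∈ Finset.Icc 2 m, (1:ℝ)/i ≤ Real.log m + 1/2 - Real.log 2 := by
  intro m hm
  induction m, hm using Nat.le_induction with
  | base => norm_num
  | succ m hm ih =>
    rw [Finset.sum_Icc_succ_top (by omega : 2 ≤ m + 1)]
    have hm0 : (0:ℝ) < m := by exact_mod_cast (show 0 < m by omega)
    have hm1 : (0:ℝ) < (m:ℝ) + 1 := by linarith
    have hkey : (1:ℝ)/((m:ℝ)+1) ≤ Real.log ((m:ℝ)+1) - Real.log m := by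
      have hx : (0:ℝ) < (m:ℝ)/((m:ℝ)+1) := by positivity
      have h := Real.log_le_sub_one_of_pos hx
      rw [Real.log_div (by positivity) (by positivity)] at h
      have h1 : (m:ℝ)/((m:ℝ)+1) - 1 = -(1/((m:ℝ)+1)) := by field_simp; ring
      linarith
    push_cast
    linarith

private lemma prod_ratio_bound (c : ℝ) (hc0 : 0 ≤ c) (m : ℕ) (hm : 2 ≤ m) :
    ∏ i ∈ Finset.Icc 2 m, (((i:ℝ)+c)/i) ≤
      (m:ℝ) ^ c * Real.exp ((1/2 - Real.log 2) * c) := by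
  have hm0 : (0:ℝ) < m := by exact_mod_cast (show 0 < m by omega)
  have h1 : ∏ i ∈ Finset.Icc 2 m, (((i:ℝ)+c)/i) ≤
      ∏ i ∈ Finset.Icc 2 m, Real.exp (c / i) := by
    apply Finset.prod_le_prod
    · intro i hi
      have hi0 : (0:ℝ) < i := by
        have h := (Finset.mem_Icc.mp hi).1; exact_mod_cast (show 0 < i by omega)
      positivity
    · intro i hi
      have hi0 : (0:ℝ) < i := by
        have h := (Finset.mem_Icc.mp hi).1; exact_mod_cast (show 0 < i by omega)
      have heq : ((i:ℝ)+c)/i = c/i + 1 := by field_simp; ring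
      rw [heq]
      exact Real.add_one_le_exp _
  rw [← Real.exp_sum] at h1
  have h2 : ∑ i ∈ Finset.Icc 2 m, c / (i:ℝ) = c * ∑ i ∈ Finset.Icc 2 m, (1:ℝ)/i := by
    rw [Finset.mul_sum]; apply Finset.sum_congr rfl; intro i _; ring
  calc ∏ i ∈ Finset.Icc 2 m, (((i:ℝ)+c)/i)
      ≤ Real.exp (∑ i ∈ Finset.Icc 2 m, c / (i:ℝ)) := h1
    _ ≤ Real.exp (c * (Real.log m + 1/2 - Real.log 2)) := by
        rw [h2]
        exact Real.exp_le_exp.mpr (mul_le_mul_of_nonneg_left (harmonic_bound m hm) hc0)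
    _ = (m:ℝ) ^ c * Real.exp ((1/2 - Real.log 2) * c) := by
        rw [Real.rpow_def_of_pos hm0, ← Real.exp_add]
        congr 1; ring

/-- For `c = γβ* ∈ [0,1)` and `α_n = (∏_{i=1}^{n-1} (i + c)) / (∏_{i=2}^{n} i)`,
we have `α_n ≤ ((n-1)^c / n) (1 + c) e^{(0.5 - ln 2) c}` for all `n ≥ 3`;
in particular `α_n → 0` as `n → ∞`. -/
theorem ttql_init_coeff_bound
    (c : ℝ) (hc0 : 0 ≤ c) (hc : c < 1) :
    (∀ n : ℕ, 3 ≤ n →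
      (∏ i ∈ Finset.Ico 1 n, ((i : ℝ) + c)) / (∏ i ∈ Finset.Icc 2 n, (i : ℝ)) ≤
        (((n : ℝ) - 1) ^ c / (n : ℝ)) * (1 + c) * Real.exp ((0.5 - Real.log 2) * c))
    ∧ Tendsto (fun n : ℕ =>
        (∏ i ∈ Finset.Ico 1 n, ((i : ℝ) + c)) / (∏ i ∈ Finset.Icc 2 n, (i : ℝ)))
        atTop (nhds 0) := by
  have E := Real.exp ((0.5 - Real.log 2) * c)
  have hE : (0:ℝ) < Real.exp ((0.5 - Real.log 2) * c) := Real.exp_pos _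
  have main : ∀ n : ℕ, 3 ≤ n →
      (∏ i ∈ Finset.Ico 1 n, ((i : ℝ) + c)) / (∏ i ∈ Finset.Icc 2 n, (i : ℝ)) ≤
        (((n : ℝ) - 1) ^ c / (n : ℝ)) * (1 + c) * Real.exp ((0.5 - Real.log 2) * c) := by
    intro n hn
    obtain ⟨m, rfl⟩ : ∃ m, n = m + 1 := ⟨n - 1, by omega⟩
    have hm : 2 ≤ m := by omega
    have hm0 : (0:ℝ) < m := by exact_mod_cast (show 0 < m by omega)
    have hn0 : (0:ℝ) < (m:ℝ) + 1 := by linarith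
    -- split products
    have hnum : ∏ i ∈ Finset.Ico 1 (m+1), ((i : ℝ) + c)
        = (1 + c) * ∏ i ∈ Finset.Icc 2 m, ((i : ℝ) + c) := by
      rw [Finset.prod_eq_prod_Ico_succ_bot (by omega : 1 < m + 1)]
      rw [Finset.Ico_add_one_right_eq_Icc]
      norm_num
    have hden : ∏ i ∈ Finset.Icc 2 (m+1), (i : ℝ)
        = (∏ i ∈ Finset.Icc 2 m, (i : ℝ)) * ((m:ℝ) + 1) := by
      rw [Finset.prod_Icc_succ_top (by omega : 2 ≤ m + 1)]
      push_cast; ring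
    have hQ : (0:ℝ) < ∏ i ∈ Finset.Icc 2 m, (i : ℝ) := by
      apply Finset.prod_pos
      intro i hi
      have h := (Finset.mem_Icc.mp hi).1
      exact_mod_cast (show 0 < i by omega)
    have hPQ : (∏ i ∈ Finset.Icc 2 m, ((i : ℝ) + c)) / (∏ i ∈ Finset.Icc 2 m, (i : ℝ))
        = ∏ i ∈ Finset.Icc 2 m, (((i:ℝ)+c)/i) := by
      rw [Finset.prod_div_distrib]
    have hbound := prod_ratio_bound c hc0 m hm
    have hcast : ((m:ℝ) + 1) - 1 = (m:ℝ) := by ring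
    rw [hnum, hden]
    push_cast
    rw [hcast]
    have key : (∏ i ∈ Finset.Icc 2 m, ((i : ℝ) + c)) / (∏ i ∈ Finset.Icc 2 m, (i : ℝ))
        ≤ (m:ℝ) ^ c * Real.exp ((0.5 - Real.log 2) * c) := by
      rw [hPQ]
      convert hbound using 3
      norm_num
    have h1c : (0:ℝ) < 1 + c := by linarith
    calc (1 + c) * (∏ i ∈ Finset.Icc 2 m, ((i : ℝ) + c)) /
          ((∏ i ∈ Finset.Icc 2 m, (i : ℝ)) * ((m:ℝ) + 1))
        = ((1+c) / ((m:ℝ)+1)) *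
          ((∏ i ∈ Finset.Icc 2 m, ((i : ℝ) + c)) / (∏ i ∈ Finset.Icc 2 m, (i : ℝ))) := by
          rw [mul_comm (∏ i ∈ Finset.Icc 2 m, (i:ℝ)) ((m:ℝ)+1), mul_div_mul_comm]
      _ ≤ ((1+c) / ((m:ℝ)+1)) * ((m:ℝ) ^ c * Real.exp ((0.5 - Real.log 2) * c)) := by
          apply mul_le_mul_of_nonneg_left key (by positivity)
      _ = ((m:ℝ) ^ c / ((m:ℝ)+1)) * (1 + c) * Real.exp ((0.5 - Real.log 2) * c) := by
          field_simp
  constructor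
  · exact main
  · set K := (1 + c) * Real.exp ((0.5 - Real.log 2) * c) with hK
    have hK0 : 0 ≤ K := by positivity
    apply squeeze_zero' (g := fun n : ℕ => K * (n:ℝ) ^ (c - 1))
    · filter_upwards [eventually_ge_atTop 3] with n hn
      apply div_nonneg
      · apply Finset.prod_nonneg; intro i _; positivity
      · apply Finset.prod_nonneg; intro i _; positivity
    · filter_upwards [eventually_ge_atTop 3] with n hn
      have hn0 : (0:ℝ) < n := by exact_mod_cast (show 0 < n by omega)
      have h1 := main n hn
      have h2 : ((n:ℝ) - 1) ^ c ≤ (n:ℝ) ^ c := by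
        apply Real.rpow_le_rpow (by
          have : (3:ℝ) ≤ n := by exact_mod_cast hn
          linarith) (by linarith) hc0
      have h3 : (n:ℝ) ^ c / n = (n:ℝ) ^ (c - 1) := by
        rw [Real.rpow_sub hn0, Real.rpow_one]
      calc (∏ i ∈ Finset.Ico 1 n, ((i : ℝ) + c)) / (∏ i ∈ Finset.Icc 2 n, (i : ℝ))
          ≤ (((n : ℝ) - 1) ^ c / (n : ℝ)) * (1 + c) * Real.exp ((0.5 - Real.log 2) * c) := h1
        _ ≤ ((n : ℝ) ^ c / (n : ℝ)) * (1 + c) * Real.exp ((0.5 - Real.log 2) * c) := by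
            gcongr
        _ = K * (n:ℝ) ^ (c - 1) := by rw [h3, hK]; ring
    · have h4 : Tendsto (fun n : ℕ => (n:ℝ) ^ (c - 1)) atTop (nhds 0) := by
        have := (tendsto_rpow_neg_atTop (by linarith : 0 < 1 - c)).comp
          tendsto_natCast_atTop_atTop
        convert this using 2 with n
        simp [Function.comp]
      simpa using h4.const_mul K
end
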